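/- Let A = ⊕_{j∈ℕ} ℤ be the group of finitely supported integer sequences and let p : A → A be the shift monomorphism p(a₁, a₂, a₃, …) = (0, a₁, a₂, a₃, …). Define the group homomorphism Φ : ∏_{n∈ℕ} A → ∏_{n∈ℕ} A by Φ((x_n)_n) = (x_n − p(x_{n+1}))_n. Then Φ is injective (so the inverse limit of the tower A ←p A ←p A ← ⋯ is trivial) and the cokernel of Φ (i.e., lim¹ of this tower) is isomorphic, as an abelian group, to (∏_{i∈ℕ} ℤ)/(⊕_{i∈ℕ} ℤ). -/

import Mathlib

/-- The subgroup `⊕_{i∈ℕ} ℤ` of `∏_{i∈ℕ} ℤ` consisting of finitely supported sequences. -/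
def finSuppSubgroup : AddSubgroup (ℕ → ℤ) where
  carrier := {x | {i | x i ≠ 0}.Finite}
  zero_mem' := by simp
  add_mem' := by
    intro a b ha hb
    apply Set.Finite.subset (ha.union hb)
    intro i hi
    by_contra h
    simp only [Set.mem_setOf_eq, not_not, Set.mem_union] at h hi
    push_neg at h
    simp [h.1, h.2] at hi
  neg_mem' := by intro a ha; simpa using ha

/-- The quotient group `(∏_{i∈ℕ} ℤ)/(⊕_{i∈ℕ} ℤ)`. -/
abbrev prodModSum : Type := (ℕ → ℤ) ⧸ finSuppSubgroup

/-- The shift monomorphism `p : ⊕_{j∈ℕ} ℤ → ⊕_{j∈ℕ} ℤ`,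
`p(a₁, a₂, a₃, …) = (0, a₁, a₂, a₃, …)`. -/
noncomputable def shiftHom : (ℕ →₀ ℤ) →+ (ℕ →₀ ℤ) :=
  Finsupp.mapDomain.addMonoidHom Nat.succ

/-- The map `Φ : ∏_n A → ∏_n A`, `Φ((x_n)_n) = (x_n − p(x_{n+1}))_n`, whose kernel is the
inverse limit and whose cokernel is `lim¹` of the tower `A ←p A ←p A ← ⋯` with `A = ⊕_{j∈ℕ} ℤ`. -/
noncomputable def towerPhi : (ℕ → (ℕ →₀ ℤ)) →+ (ℕ → (ℕ →₀ ℤ)) :=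
  AddMonoidHom.mk' (fun x n => x n - shiftHom (x (n + 1))) (by
    intro a b
    funext n
    simp only [Pi.add_apply, map_add]
    abel)


section Aux

lemma shift_apply_zero (f : ℕ →₀ ℤ) : shiftHom f 0 = 0 := by
  simp only [shiftHom, Finsupp.mapDomain.addMonoidHom_apply]
  exact Finsupp.mapDomain_notin_range _ _ (by simp)

lemma shift_apply_succ (f : ℕ →₀ ℤ) (i : ℕ) : shiftHom f (i + 1) = f i := by
  simp only [shiftHom, Finsupp.mapDomain.addMonoidHom_apply]
  exact Finsupp.mapDomain_apply Nat.succ_injective f i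

/-- The trace map `G : ∏_n A → ∏_i ℤ`, `G(x)(i) = ∑_{n ≤ i} x_n(i - n)`. -/
noncomputable def Gmap : (ℕ → (ℕ →₀ ℤ)) →+ (ℕ → ℤ) :=
  AddMonoidHom.mk' (fun x i => ∑ n ∈ Finset.range (i + 1), x n (i - n)) (by
    intro a b
    funext i
    simp [Finset.sum_add_distrib])

lemma Gmap_apply (x : ℕ → (ℕ →₀ ℤ)) (i : ℕ) :
    Gmap x i = ∑ n ∈ Finset.range (i + 1), x n (i - n) := rfl

lemma towerPhi_apply (x : ℕ → (ℕ →₀ ℤ)) (n : ℕ) :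
    towerPhi x n = x n - shiftHom (x (n + 1)) := rfl

lemma Gmap_towerPhi (x : ℕ → (ℕ →₀ ℤ)) : Gmap (towerPhi x) = fun i => x 0 i := by
  funext i
  rw [Gmap_apply]
  simp only [towerPhi_apply, Finsupp.sub_apply]
  rw [Finset.sum_sub_distrib,
    Finset.sum_range_succ (fun n => shiftHom (x (n + 1)) (i - n)),
    Finset.sum_range_succ' (fun n => x n (i - n))]
  simp only [Nat.sub_self, shift_apply_zero, Finsupp.coe_zero, Pi.zero_apply, add_zero,
    Nat.sub_zero]
  rw [Finset.sum_congr rfl (fun n hn => ?_)]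
  · abel
  · simp only [Finset.mem_range] at hn
    have h : i - n = (i - (n + 1)) + 1 := by omega
    rw [h, shift_apply_succ]

/-- Shift down by `d`: `(shiftDown d f) i = f (i + d)`. -/
noncomputable def shiftDown (d : ℕ) (f : ℕ →₀ ℤ) : ℕ →₀ ℤ :=
  Finsupp.comapDomain (· + d) f (fun a _ b _ h => add_left_injective d h)

lemma shiftDown_apply (d : ℕ) (f : ℕ →₀ ℤ) (i : ℕ) : shiftDown d f i = f (i + d) := rfl

theorem towerPhi_injective : Function.Injective towerPhi := by
  rw [injective_iff_map_eq_zero]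
  intro x hx
  have h : ∀ n, x n = shiftHom (x (n + 1)) := by
    intro n
    have := congrFun hx n
    simp only [towerPhi_apply, Pi.zero_apply, sub_eq_zero] at this
    exact this
  have key : ∀ i n, x n i = 0 := by
    intro i
    induction i with
    | zero => intro n; rw [h n, shift_apply_zero]
    | succ i ih => intro n; rw [h n, shift_apply_succ]; exact ih (n + 1)
  funext n
  ext i
  exact key i n

/-- The composite `π ∘ G : ∏_n A → (∏ℤ)/(⊕ℤ)`. -/
noncomputable def Fmap : (ℕ → (ℕ →₀ ℤ)) →+ prodModSum :=
  (QuotientAddGroup.mk' finSuppSubgroup).comp Gmap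

lemma Fmap_surjective : Function.Surjective Fmap := by
  intro q
  obtain ⟨y, rfl⟩ := QuotientAddGroup.mk'_surjective finSuppSubgroup q
  refine ⟨fun n => Finsupp.single 0 (y n), ?_⟩
  simp only [Fmap, AddMonoidHom.comp_apply]
  congr 1
  funext i
  rw [Gmap_apply, Finset.sum_range_succ]
  rw [Finset.sum_eq_zero (fun n hn => ?_)]
  · simp
  · simp only [Finset.mem_range] at hn
    exact Finsupp.single_eq_of_ne (by omega)

lemma ker_Fmap_eq : Fmap.ker = towerPhi.range := by
  ext x
  simp only [AddMonoidHom.mem_ker, AddMonoidHom.mem_range, Fmap, AddMonoidHom.comp_apply,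
    QuotientAddGroup.mk'_apply, QuotientAddGroup.eq_zero_iff]
  constructor
  · intro hx
    have hc : (Function.support (Gmap x)).Finite := hx
    set c : ℕ →₀ ℤ := Finsupp.ofSupportFinite (Gmap x) hc with hcdef
    have hcoe : ∀ i, c i = Gmap x i := fun i => congrFun Finsupp.ofSupportFinite_coe i
    refine ⟨fun n => shiftDown n c - ∑ m ∈ Finset.range n, shiftDown (n - m) (x m), ?_⟩
    funext n
    ext i
    rw [towerPhi_apply]
    match i with
    | 0 =>
      simp only [Finsupp.sub_apply, shift_apply_zero, Finsupp.coe_zero, Pi.zero_apply,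
        sub_zero, Finsupp.finset_sum_apply, shiftDown_apply, zero_add]
      have := hcoe n
      rw [Gmap_apply, Finset.sum_range_succ, Nat.sub_self] at this
      rw [this]
      abel
    | Nat.succ k =>
      rw [Finsupp.sub_apply, shift_apply_succ]
      simp only [Finsupp.sub_apply, Finsupp.finset_sum_apply, shiftDown_apply]
      rw [Finset.sum_range_succ (fun m => x m (k + (n + 1 - m)))]
      have h1 : k + 1 + n = k + (n + 1) := by omega
      have h2 : n + 1 - n = 1 := by omega
      rw [h1, h2, Finset.sum_congr rfl (fun m hm => ?_)]
      · abel
      · simp only [Finset.mem_range] at hm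
        congr 1
        omega
  · rintro ⟨w, rfl⟩
    rw [Gmap_towerPhi]
    exact (w 0).finite_support

end Aux

/-- `Φ` is injective (the inverse limit of the shift tower vanishes) and its cokernel
(`lim¹` of the shift tower) is isomorphic to `(∏_{i∈ℕ} ℤ)/(⊕_{i∈ℕ} ℤ)`. -/
theorem towerPhi_injective_and_cokernel :
    Function.Injective towerPhi ∧
      Nonempty (((ℕ → (ℕ →₀ ℤ)) ⧸ towerPhi.range) ≃+ prodModSum) := by
  refine ⟨towerPhi_injective, ⟨?_⟩⟩
  exact (QuotientAddGroup.quotientAddEquivOfEq ker_Fmap_eq.symm).trans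
    (QuotientAddGroup.quotientKerEquivOfSurjective Fmap Fmap_surjective)
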